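/- (Ahlfors–Schwarz lemma, conformal metric form on the disk.) Let u : 𝔻 → ℝ be twice continuously differentiable on the open unit disk and suppose Δu(z) ≥ 4·e^{2u(z)} for all z ∈ 𝔻, where Δ is the standard Laplacian on ℝ² ≅ ℂ. Then for every z ∈ 𝔻, e^{u(z)} ≤ 1/(1 − |z|²); that is, any conformal metric on 𝔻 of Gauss curvature at most −1 is dominated by the Poincaré metric. -/

import Mathlib

open Complex

/-- The standard Laplacian on `ℝ² ≅ ℂ`: `Δu = ∂²u/∂x² + ∂²u/∂y²`, written as the sum of
second directional derivatives in the directions `1` and `i`. -/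
noncomputable def laplacian (u : ℂ → ℝ) (z : ℂ) : ℝ :=
  fderiv ℝ (fun w : ℂ => fderiv ℝ u w 1) z 1 +
    fderiv ℝ (fun w : ℂ => fderiv ℝ u w Complex.I) z Complex.I

open Filter Topology Set


lemma second_deriv_nonpos_1d {f f' : ℝ → ℝ} {a : ℝ}
    (hd : ∀ᶠ t in 𝓝 (0:ℝ), HasDerivAt f (f' t) t)
    (h2 : HasDerivAt f' a 0)
    (hmax : IsLocalMax f 0) : a ≤ 0 := by
  by_contra hpos
  push_neg at hpos
  have h0 : f' 0 = 0 := hmax.hasDerivAt_eq_zero hd.self_of_nhds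
  have hs : Tendsto (slope f' 0) (𝓝[≠] (0:ℝ)) (𝓝 a) :=
    hasDerivAt_iff_tendsto_slope.1 h2
  have hs' : ∀ᶠ t in 𝓝[>] (0:ℝ), 0 < f' t := by
    have h1 : Tendsto (slope f' 0) (𝓝[>] (0:ℝ)) (𝓝 a) :=
      hs.mono_left (nhdsWithin_mono _ (fun x hx => ne_of_gt hx))
    have h2' : ∀ᶠ t in 𝓝[>] (0:ℝ), 0 < slope f' 0 t :=
      h1.eventually (eventually_gt_nhds hpos)
    filter_upwards [h2', self_mem_nhdsWithin] with t ht ht'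
    have hsl : slope f' 0 t = f' t / t := by
      simp [slope_def_field, h0]
    rw [hsl] at ht
    have htt : (0:ℝ) < t := ht'
    rcases div_pos_iff.mp ht with ⟨h,_⟩ | ⟨_,h⟩
    · exact h
    · linarith
  have hall : ∀ᶠ t in 𝓝[>] (0:ℝ),
      0 < f' t ∧ HasDerivAt f (f' t) t ∧ f t ≤ f 0 := by
    filter_upwards [hs', (hd.and hmax).filter_mono nhdsWithin_le_nhds] with t h1 h2
    exact ⟨h1, h2.1, h2.2⟩
  obtain ⟨ε, hε, hsub⟩ := mem_nhdsGT_iff_exists_Ioo_subset.1 hall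
  set t := ε / 2 with ht
  have hε' : (0:ℝ) < ε := hε
  have htpos : (0:ℝ) < t := by rw [ht]; linarith
  have htmem : ∀ s ∈ Ioc 0 t, 0 < f' s ∧ HasDerivAt f (f' s) s ∧ f s ≤ f 0 := by
    intro s hs'
    exact hsub ⟨hs'.1, lt_of_le_of_lt hs'.2 (by simp [ht]; linarith)⟩
  have hcont : ContinuousOn f (Icc 0 t) := by
    intro s hsmem
    rcases eq_or_lt_of_le hsmem.1 with h | h
    · subst h
      exact (hd.self_of_nhds).continuousAt.continuousWithinAt
    · exact ((htmem s ⟨h, hsmem.2⟩).2.1.continuousAt).continuousWithinAt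
  obtain ⟨c, hc, hceq⟩ := exists_hasDerivAt_eq_slope f f' htpos hcont
    (fun x hx => (htmem x ⟨hx.1, le_of_lt hx.2⟩).2.1)
  have hcpos : 0 < f' c := (htmem c ⟨hc.1, le_of_lt hc.2⟩).1
  have hft : f t ≤ f 0 := (htmem t ⟨htpos, le_refl t⟩).2.2
  rw [hceq] at hcpos
  have : (f t - f 0) / (t - 0) ≤ 0 := by
    apply div_nonpos_of_nonpos_of_nonneg <;> linarith
  linarith

lemma second_dir_nonpos {g : ℂ → ℝ} {z₀ : ℂ} {s : Set ℂ} (hs : IsOpen s) (hz : z₀ ∈ s)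
    (hg : ContDiffOn ℝ 2 g s) (hmax : IsLocalMax g z₀) (v : ℂ) :
    fderiv ℝ (fun w => fderiv ℝ g w v) z₀ v ≤ 0 := by
  have hline : Tendsto (fun t : ℝ => z₀ + t • v) (𝓝 0) (𝓝 z₀) := by
    have : Continuous (fun t : ℝ => z₀ + t • v) := by continuity
    have h := this.tendsto 0
    simpa using h
  have hlineDeriv : ∀ t : ℝ, HasDerivAt (fun t : ℝ => z₀ + t • v) v t := by
    intro t
    simpa using ((hasDerivAt_id t).smul_const v).const_add z₀
  -- differentiability of g eventually along the line
  have hdiff : ∀ᶠ t in 𝓝 (0:ℝ), DifferentiableAt ℝ g (z₀ + t • v) := by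
    filter_upwards [hline.eventually (hs.mem_nhds hz)] with t ht
    exact (hg.contDiffAt (hs.mem_nhds ht)).differentiableAt (by norm_num)
  have hd : ∀ᶠ t in 𝓝 (0:ℝ),
      HasDerivAt (fun t : ℝ => g (z₀ + t • v)) (fderiv ℝ g (z₀ + t • v) v) t := by
    filter_upwards [hdiff] with t ht
    exact ht.hasFDerivAt.comp_hasDerivAt t (hlineDeriv t)
  -- second derivative
  have hdf : DifferentiableAt ℝ (fderiv ℝ g) z₀ :=
    (((hg.contDiffAt (hs.mem_nhds hz)).fderiv_right (m := 1)
      (by norm_num)).differentiableAt (by norm_num))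
  have hh : DifferentiableAt ℝ (fun w => fderiv ℝ g w v) z₀ := by
    exact (ContinuousLinearMap.apply ℝ ℝ v).differentiableAt.comp z₀ hdf
  have h2 : HasDerivAt (fun t : ℝ => fderiv ℝ g (z₀ + t • v) v)
      (fderiv ℝ (fun w => fderiv ℝ g w v) z₀ v) 0 := by
    have hz0 : z₀ = z₀ + (0:ℝ) • v := by simp
    have hfd : HasFDerivAt (fun w => fderiv ℝ g w v)
        (fderiv ℝ (fun w => fderiv ℝ g w v) z₀) (z₀ + (0:ℝ) • v) := hz0 ▸ hh.hasFDerivAt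
    have := hfd.comp_hasDerivAt 0 (hlineDeriv 0)
    exact this
  have hmaxφ : IsLocalMax (fun t : ℝ => g (z₀ + t • v)) 0 := by
    have := hline.eventually hmax
    simpa [IsLocalMax, IsMaxFilter] using this
  exact second_deriv_nonpos_1d hd h2 hmaxφ

lemma laplacian_nonpos_of_isLocalMax {g : ℂ → ℝ} {z₀ : ℂ} {s : Set ℂ} (hs : IsOpen s)
    (hz : z₀ ∈ s) (hg : ContDiffOn ℝ 2 g s) (hmax : IsLocalMax g z₀) :
    laplacian g z₀ ≤ 0 := by
  have h1 := second_dir_nonpos hs hz hg hmax 1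
  have h2 := second_dir_nonpos hs hz hg hmax Complex.I
  unfold laplacian
  linarith

/-- `P r z = r² - |z|²` as an explicit polynomial in `re`, `im`. -/
def Pfun (r : ℝ) (z : ℂ) : ℝ := r ^ 2 - (z.re * z.re + z.im * z.im)

lemma hasFDerivAt_re (z : ℂ) : HasFDerivAt (fun z : ℂ => z.re) Complex.reCLM z :=
  Complex.reCLM.hasFDerivAt

lemma hasFDerivAt_im (z : ℂ) : HasFDerivAt (fun z : ℂ => z.im) Complex.imCLM z :=
  Complex.imCLM.hasFDerivAt

noncomputable def DP (z : ℂ) : ℂ →L[ℝ] ℝ :=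
  -(z.re • Complex.reCLM + z.re • Complex.reCLM + (z.im • Complex.imCLM + z.im • Complex.imCLM))

lemma hasFDerivAt_Pfun (r : ℝ) (z : ℂ) : HasFDerivAt (Pfun r) (DP z) z := by
  have h1 := ((hasFDerivAt_re z).mul (hasFDerivAt_re z)).add
    ((hasFDerivAt_im z).mul (hasFDerivAt_im z))
  have h2 := (hasFDerivAt_const (r ^ 2) z).sub h1
  refine h2.congr_fderiv ?_
  ext w
  simp [DP]

lemma DP_apply (z v : ℂ) : DP z v = -(2 * z.re * v.re + 2 * z.im * v.im) := by
  simp [DP]; ring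

lemma contDiffPfun (r : ℝ) : ContDiff ℝ 2 (Pfun r) := by
  exact contDiff_const.sub ((Complex.reCLM.contDiff.mul Complex.reCLM.contDiff).add
    (Complex.imCLM.contDiff.mul Complex.imCLM.contDiff))

lemma pos_open (r : ℝ) : IsOpen {z : ℂ | 0 < Pfun r z} :=
  isOpen_lt continuous_const ((contDiffPfun r).continuous)

lemma hasFDerivAt_logP {r : ℝ} {z : ℂ} (hz : 0 < Pfun r z) :
    HasFDerivAt (fun z => Real.log (Pfun r z)) ((Pfun r z)⁻¹ • DP z) z :=
  (hasFDerivAt_Pfun r z).log (ne_of_gt hz)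

/-- directional derivative of log P agrees with explicit quotient on the region. -/
lemma dir_logP_eq {r : ℝ} {z : ℂ} (hz : 0 < Pfun r z) (v : ℂ) :
    fderiv ℝ (fun w => Real.log (Pfun r w)) z v
      = -(2 * z.re * v.re + 2 * z.im * v.im) / Pfun r z := by
  rw [(hasFDerivAt_logP hz).fderiv]
  simp [DP_apply]
  rw [inv_mul_eq_div]

/-- second directional derivative of log P. -/
lemma fderiv_dir_logP {r : ℝ} {z₀ : ℂ} (hz : 0 < Pfun r z₀) (v : ℂ) :
    fderiv ℝ (fun w => fderiv ℝ (fun y => Real.log (Pfun r y)) w v) z₀ v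
      = -(2 * v.re * v.re + 2 * v.im * v.im) / Pfun r z₀
        - (2 * z₀.re * v.re + 2 * z₀.im * v.im) ^ 2 / (Pfun r z₀) ^ 2 := by
  -- the explicit function
  set q : ℂ → ℝ := fun z => (-(2 * z.re * v.re + 2 * z.im * v.im)) * (Pfun r z)⁻¹ with hq
  have heq : (fun w => fderiv ℝ (fun y => Real.log (Pfun r y)) w v) =ᶠ[𝓝 z₀] q := by
    filter_upwards [(pos_open r).mem_nhds hz] with w hw
    rw [dir_logP_eq hw v, div_eq_mul_inv]
  -- derivative of the numerator
  have hnum : HasFDerivAt (fun z : ℂ => -(2 * z.re * v.re + 2 * z.im * v.im))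
      (-((2 * v.re) • Complex.reCLM + (2 * v.im) • Complex.imCLM)) z₀ := by
    have h1 := (((hasFDerivAt_re z₀).const_mul (2:ℝ)).mul_const v.re).add
      (((hasFDerivAt_im z₀).const_mul (2:ℝ)).mul_const v.im)
    have := h1.neg
    refine this.congr_fderiv ?_
    ext w
    simp; ring
  -- derivative of the inverse
  have hinv : HasFDerivAt (fun z : ℂ => (Pfun r z)⁻¹)
      ((-(Pfun r z₀ ^ 2)⁻¹) • DP z₀) z₀ :=
    (hasDerivAt_inv (ne_of_gt hz)).comp_hasFDerivAt z₀ (hasFDerivAt_Pfun r z₀)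
  have hqd : HasFDerivAt q
      ((-(2 * z₀.re * v.re + 2 * z₀.im * v.im)) • ((-(Pfun r z₀ ^ 2)⁻¹) • DP z₀)
        + (Pfun r z₀)⁻¹ • (-((2 * v.re) • Complex.reCLM + (2 * v.im) • Complex.imCLM))) z₀ :=
    hnum.mul hinv
  rw [heq.fderiv_eq, hqd.fderiv]
  have hP := ne_of_gt hz
  simp [DP_apply]
  field_simp
  ring

lemma laplacian_logP {r : ℝ} {z₀ : ℂ} (hz : 0 < Pfun r z₀) :
    laplacian (fun z => Real.log (Pfun r z)) z₀ = -(4 * r ^ 2) / (Pfun r z₀) ^ 2 := by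
  unfold laplacian
  rw [fderiv_dir_logP hz 1, fderiv_dir_logP hz Complex.I]
  have hP := ne_of_gt hz
  have hPdef : Pfun r z₀ = r ^ 2 - (z₀.re * z₀.re + z₀.im * z₀.im) := rfl
  simp only [Complex.one_re, Complex.one_im, Complex.I_re, Complex.I_im]
  field_simp
  rw [hPdef]
  ring

lemma Pfun_eq (r : ℝ) (z : ℂ) : Pfun r z = r ^ 2 - ‖z‖ ^ 2 := by
  rw [Complex.sq_norm, Complex.normSq_apply]; rfl

lemma Pfun_pos {r : ℝ} {z : ℂ} (h : ‖z‖ < r) : 0 < Pfun r z := by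
  rw [Pfun_eq]
  nlinarith [norm_nonneg z]

lemma abs_lt_of_Pfun_pos {r : ℝ} {z : ℂ} (hr : 0 < r) (h : 0 < Pfun r z) :
    ‖z‖ < r := by
  rw [Pfun_eq] at h
  nlinarith [norm_nonneg z]


lemma dir_differentiableAt {u : ℂ → ℝ} {z₀ : ℂ} (h : ContDiffAt ℝ 2 u z₀) (v : ℂ) :
    DifferentiableAt ℝ (fun w => fderiv ℝ u w v) z₀ :=
  (ContinuousLinearMap.apply ℝ ℝ v).differentiableAt.comp z₀
    ((h.fderiv_right (m := 1) (by norm_num)).differentiableAt (by norm_num))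

lemma laplacian_add {u w : ℂ → ℝ} {z₀ : ℂ}
    (hu2 : ContDiffAt ℝ 2 u z₀) (hw2 : ContDiffAt ℝ 2 w z₀)
    (hud : ∀ᶠ z in 𝓝 z₀, DifferentiableAt ℝ u z)
    (hwd : ∀ᶠ z in 𝓝 z₀, DifferentiableAt ℝ w z) :
    laplacian (fun z => u z + w z) z₀ = laplacian u z₀ + laplacian w z₀ := by
  have key : ∀ v : ℂ, fderiv ℝ (fun z => fderiv ℝ (fun y => u y + w y) z v) z₀ v
      = fderiv ℝ (fun z => fderiv ℝ u z v) z₀ v + fderiv ℝ (fun z => fderiv ℝ w z v) z₀ v := by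
    intro v
    have heq : (fun z => fderiv ℝ (fun y => u y + w y) z v)
        =ᶠ[𝓝 z₀] (fun z => fderiv ℝ u z v + fderiv ℝ w z v) := by
      filter_upwards [hud, hwd] with z h1 h2
      rw [fderiv_fun_add h1 h2]
      simp
    rw [heq.fderiv_eq, fderiv_fun_add (dir_differentiableAt hu2 v) (dir_differentiableAt hw2 v)]
    simp
  unfold laplacian
  rw [key 1, key Complex.I]
  ring

/-- **Ahlfors–Schwarz lemma**, conformal metric form on the disk: any conformal metric
`e^u|dz|` on `𝔻` of Gauss curvature at most `-1` (i.e. `Δu ≥ 4e^{2u}`) is dominated by the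
Poincaré metric `|dz|/(1 - |z|²)`. -/
theorem ahlfors_schwarz_conformal (u : ℂ → ℝ)
    (hu : ContDiffOn ℝ 2 u (Metric.ball (0 : ℂ) 1))
    (hcurv : ∀ z ∈ Metric.ball (0 : ℂ) 1, 4 * Real.exp (2 * u z) ≤ laplacian u z) :
    ∀ z ∈ Metric.ball (0 : ℂ) 1, Real.exp (u z) ≤ 1 / (1 - ‖z‖ ^ 2) := by
  have key : ∀ z : ℂ, ∀ r : ℝ, ‖z‖ < r → r < 1 →
      Real.exp (u z) * Pfun r z ≤ r := by
    intro z r hzr hr1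
    have hr0 : 0 < r := lt_of_le_of_lt (norm_nonneg z) hzr
    set K := Metric.closedBall (0 : ℂ) r with hK
    have hKsub : K ⊆ Metric.ball 0 1 := Metric.closedBall_subset_ball hr1
    have hFcont : ContinuousOn (fun w => Real.exp (u w) * Pfun r w) K :=
      (Real.continuous_exp.comp_continuousOn (hu.continuousOn.mono hKsub)).mul
        (contDiffPfun r).continuous.continuousOn
    obtain ⟨z₀, hz₀K, hmax⟩ := (isCompact_closedBall (0:ℂ) r).exists_isMaxOn
      ⟨0, Metric.mem_closedBall_self hr0.le⟩ hFcont
    have hzK : z ∈ K := by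
      rw [hK, Metric.mem_closedBall, Complex.dist_eq, sub_zero]
      exact hzr.le
    have hPz : 0 < Pfun r z := Pfun_pos hzr
    have hFz : 0 < Real.exp (u z) * Pfun r z := mul_pos (Real.exp_pos _) hPz
    have hFz₀ : 0 < Real.exp (u z₀) * Pfun r z₀ := lt_of_lt_of_le hFz (hmax hzK)
    have hPz₀ : 0 < Pfun r z₀ := by
      nlinarith [Real.exp_pos (u z₀)]
    have hz₀ball : z₀ ∈ Metric.ball (0 : ℂ) r := by
      rw [Metric.mem_ball, Complex.dist_eq, sub_zero]
      exact abs_lt_of_Pfun_pos hr0 hPz₀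
    have hz₀1 : z₀ ∈ Metric.ball (0 : ℂ) 1 := hKsub hz₀K
    -- local max of g = u + log P
    have hmaxg : IsLocalMax (fun w => u w + Real.log (Pfun r w)) z₀ := by
      show ∀ᶠ w in 𝓝 z₀, _ ≤ _
      filter_upwards [Metric.isOpen_ball.mem_nhds hz₀ball] with w hw
      have hPw : 0 < Pfun r w := by
        apply Pfun_pos
        rw [Metric.mem_ball, Complex.dist_eq, sub_zero] at hw
        exact hw
      have h1 : Real.exp (u w) * Pfun r w ≤ Real.exp (u z₀) * Pfun r z₀ :=
        hmax (Metric.ball_subset_closedBall hw)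
      have h2 := Real.log_le_log (mul_pos (Real.exp_pos _) hPw) h1
      rwa [Real.log_mul (ne_of_gt (Real.exp_pos _)) (ne_of_gt hPw), Real.log_exp,
        Real.log_mul (ne_of_gt (Real.exp_pos _)) (ne_of_gt hPz₀), Real.log_exp] at h2
    -- C² of g on ball r
    have hgC2 : ContDiffOn ℝ 2 (fun w => u w + Real.log (Pfun r w)) (Metric.ball (0:ℂ) r) := by
      apply (hu.mono (Metric.ball_subset_ball hr1.le)).add
      apply ContDiffOn.log (contDiffPfun r).contDiffOn
      intro w hw
      apply ne_of_gt
      apply Pfun_pos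
      rw [Metric.mem_ball, Complex.dist_eq, sub_zero] at hw
      exact hw
    have hlap : laplacian (fun w => u w + Real.log (Pfun r w)) z₀ ≤ 0 :=
      laplacian_nonpos_of_isLocalMax Metric.isOpen_ball hz₀ball hgC2 hmaxg
    have hadd : laplacian (fun w => u w + Real.log (Pfun r w)) z₀
        = laplacian u z₀ + laplacian (fun w => Real.log (Pfun r w)) z₀ := by
      apply laplacian_add
      · exact hu.contDiffAt (Metric.isOpen_ball.mem_nhds hz₀1)
      · exact ((contDiffPfun r).contDiffAt).log (ne_of_gt hPz₀)
      · filter_upwards [Metric.isOpen_ball.mem_nhds hz₀1] with w hw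
        exact (hu.contDiffAt (Metric.isOpen_ball.mem_nhds hw)).differentiableAt (by norm_num)
      · filter_upwards [(pos_open r).mem_nhds hPz₀] with w hw
        exact (((contDiffPfun r).contDiffAt).log (ne_of_gt hw)).differentiableAt (by norm_num)
    have hlapP := laplacian_logP hPz₀
    have hcurv' := hcurv z₀ hz₀1
    -- 4 exp(2u) ≤ 4 r² / P²
    have h1 : 4 * Real.exp (2 * u z₀) ≤ 4 * r ^ 2 / Pfun r z₀ ^ 2 := by
      rw [hadd, hlapP] at hlap
      have : laplacian u z₀ ≤ 4 * r ^ 2 / Pfun r z₀ ^ 2 := by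
        have hP2 : (0:ℝ) < Pfun r z₀ ^ 2 := by positivity
        rw [neg_div] at hlap
        linarith
      linarith
    have hP2 : (0:ℝ) < Pfun r z₀ ^ 2 := by positivity
    have h1' : 4 * Real.exp (2 * u z₀) * Pfun r z₀ ^ 2 ≤ 4 * r ^ 2 :=
      (le_div_iff₀ hP2).1 h1
    have h2 : Real.exp (2 * u z₀) = Real.exp (u z₀) ^ 2 := by
      rw [two_mul, Real.exp_add]; ring
    have h3 : (Real.exp (u z₀) * Pfun r z₀) ^ 2 ≤ r ^ 2 := by
      rw [mul_pow]
      nlinarith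
    have hexp : Real.exp (u z₀) * Pfun r z₀ ≤ r :=
      (pow_le_pow_iff_left₀ (by positivity) hr0.le (by norm_num)).1 h3
    exact le_trans (hmax hzK) hexp
  intro z hz
  have haz : ‖z‖ < 1 := by
    rw [Metric.mem_ball, Complex.dist_eq, sub_zero] at hz
    exact hz
  have hne : (𝓝[Ioo (‖z‖) 1] (1:ℝ)).NeBot := right_nhdsWithin_Ioo_neBot haz
  have hle : Real.exp (u z) * (1 - ‖z‖ ^ 2) ≤ 1 := by
    apply le_of_tendsto_of_tendsto
      (f := fun r : ℝ => Real.exp (u z) * (r ^ 2 - ‖z‖ ^ 2))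
      (g := fun r : ℝ => r) (b := 𝓝[Ioo (‖z‖) 1] (1:ℝ))
    · have hc : Continuous (fun r : ℝ => Real.exp (u z) * (r ^ 2 - ‖z‖ ^ 2)) := by
        continuity
      have := hc.tendsto 1
      simp only [one_pow] at this
      exact this.mono_left nhdsWithin_le_nhds
    · exact (continuous_id.tendsto 1).mono_left nhdsWithin_le_nhds
    · filter_upwards [self_mem_nhdsWithin] with r hr
      have := key z r hr.1 hr.2
      rwa [Pfun_eq] at this
  have h1 : (0:ℝ) < 1 - ‖z‖ ^ 2 := by
    nlinarith [norm_nonneg z]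
  rw [le_div_iff₀ h1]
  exact hle
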